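/- Let φ(x) = exp(-x²), let λ > 0 be fixed, and let (c_k)_{k∈ℤ} be complex coefficients with Σ_{k∈ℤ} |c_k|² < ∞. Then the series Σ_{k=-∞}^{∞} c_k φ(x - λk) converges in L²(ℝ) (i.e. its symmetric partial sums f_n(x) = Σ_{|k|≤n} c_k φ(x - λk) form a Cauchy sequence in L²(ℝ)), the quantity M(λ) := (2π/λ) · sup_{ω∈ℝ} Σ_{l∈ℤ} |φ̂((ω + 2πl)/λ)|² is finite, and the limit f satisfies ‖f‖_{L²(ℝ)}² ≤ M(λ) · Σ_{k∈ℤ} |c_k|². -/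

import Mathlib

open MeasureTheory Real

/-- The Gaussian `φ(x) = exp(-x²)`. -/
noncomputable def gauss (x : ℝ) : ℝ := Real.exp (-x ^ 2)

/-- The Fourier transform of the Gaussian: `φ̂(ω) = (1/√2) exp(-ω²/4)`. -/
noncomputable def gaussFT (w : ℝ) : ℝ := (1 / Real.sqrt 2) * Real.exp (-w ^ 2 / 4)

open scoped ENNReal NNReal

section Aux

lemma summable_exp_neg_sq_nat {b : ℝ} (hb : 0 < b) :
    Summable fun n : ℕ => Real.exp (-b * (n : ℝ) ^ 2) := by
  refine Summable.of_nonneg_of_le (fun n => (Real.exp_pos _).le) ?_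
    (summable_geometric_of_lt_one (Real.exp_pos (-b)).le
      (Real.exp_lt_one_iff.2 (by linarith)))
  intro n
  rw [← Real.exp_nat_mul]
  apply Real.exp_le_exp.2
  have hn : (n:ℝ) ≤ (n:ℝ) ^ 2 := by
    rcases Nat.eq_zero_or_pos n with h | h
    · simp [h]
    · have h1 : (1:ℝ) ≤ (n:ℝ) := by exact_mod_cast h
      nlinarith
  nlinarith

lemma summable_exp_neg_sq {b : ℝ} (hb : 0 < b) :
    Summable fun n : ℤ => Real.exp (-b * (n : ℝ) ^ 2) := by
  apply Summable.of_nat_of_neg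
  · exact_mod_cast summable_exp_neg_sq_nat hb
  · simpa using summable_exp_neg_sq_nat hb

lemma gauss_prod_eq (a b x : ℝ) :
    gauss (x - a) * gauss (x - b) =
      Real.exp (-(a - b) ^ 2 / 2) * Real.exp (-2 * (x - (a + b) / 2) ^ 2) := by
  simp only [gauss, ← Real.exp_add]
  ring_nf

lemma gauss_mul_integrable (a b : ℝ) :
    Integrable (fun x : ℝ => gauss (x - a) * gauss (x - b)) := by
  simp only [gauss_prod_eq a b]
  exact (((integrable_exp_neg_mul_sq two_pos).comp_sub_right ((a + b) / 2)).const_mul _)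

lemma gauss_mul_integral (a b : ℝ) :
    ∫ x : ℝ, gauss (x - a) * gauss (x - b) =
      Real.sqrt (π / 2) * Real.exp (-(a - b) ^ 2 / 2) := by
  simp only [gauss_prod_eq a b]
  rw [MeasureTheory.integral_const_mul,
    integral_sub_right_eq_self (fun x => Real.exp (-2 * x ^ 2)) ((a+b)/2),
    integral_gaussian]
  ring

lemma sum_translates_le (lam : ℝ) (hlam : 0 < lam) (k : ℤ) (S : Finset ℤ) :
    ∑ j ∈ S, Real.exp (-(lam ^ 2 / 2) * ((k : ℝ) - j) ^ 2) ≤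
      ∑' m : ℤ, Real.exp (-(lam ^ 2 / 2) * (m : ℝ) ^ 2) := by
  have hs := summable_exp_neg_sq (b := lam ^ 2 / 2) (by positivity)
  have : ∑ j ∈ S, Real.exp (-(lam ^ 2 / 2) * ((k : ℝ) - j) ^ 2) =
      ∑ m ∈ S.image (fun j => k - j), Real.exp (-(lam ^ 2 / 2) * (m : ℝ) ^ 2) := by
    rw [Finset.sum_image (by intro a _ b _ h; have h' : k - a = k - b := h; omega)]
    congr 1; ext j; push_cast; ring_nf
  rw [this]
  exact Summable.sum_le_tsum _ (fun _ _ => (Real.exp_pos _).le) hs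

lemma norm_sq_sum_eq (lam : ℝ) (c : ℤ → ℂ) (S : Finset ℤ) (x : ℝ) :
    ‖∑ k ∈ S, c k * (gauss (x - lam * k) : ℂ)‖ ^ 2 =
      ∑ k ∈ S, ∑ j ∈ S, (c k * (starRingEnd ℂ) (c j)).re *
        (gauss (x - lam * k) * gauss (x - lam * j)) := by
  have : (‖∑ k ∈ S, c k * (gauss (x - lam * k) : ℂ)‖ ^ 2 : ℝ) =
      ((∑ k ∈ S, c k * (gauss (x - lam * k) : ℂ)) *
        (starRingEnd ℂ) (∑ j ∈ S, c j * (gauss (x - lam * j) : ℂ))).re := by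
    rw [Complex.mul_conj]
    simp [Complex.sq_norm]
  rw [this, map_sum, Finset.sum_mul_sum, Complex.re_sum]
  refine Finset.sum_congr rfl fun k _ => ?_
  rw [Complex.re_sum]
  refine Finset.sum_congr rfl fun j _ => ?_
  rw [map_mul, Complex.conj_ofReal]
  have : c k * (gauss (x - lam * k) : ℂ) * ((starRingEnd ℂ) (c j) * (gauss (x - lam * j) : ℂ))
      = (c k * (starRingEnd ℂ) (c j)) * ((gauss (x - lam * k) * gauss (x - lam * j) : ℝ) : ℂ) := by
    push_cast; ring
  rw [this, Complex.mul_re, Complex.ofReal_re, Complex.ofReal_im]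
  ring

lemma finite_integrable (lam : ℝ) (c : ℤ → ℂ) (S : Finset ℤ) :
    Integrable (fun x : ℝ => ‖∑ k ∈ S, c k * (gauss (x - lam * k) : ℂ)‖ ^ 2) := by
  simp only [norm_sq_sum_eq lam c S]
  exact integrable_finset_sum S fun k _ => integrable_finset_sum S fun j _ =>
    (gauss_mul_integrable (lam * k) (lam * j)).const_mul _

lemma finite_bound (lam : ℝ) (hlam : 0 < lam) (c : ℤ → ℂ) (S : Finset ℤ) :
    ∫ x : ℝ, ‖∑ k ∈ S, c k * (gauss (x - lam * k) : ℂ)‖ ^ 2 ≤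
      (Real.sqrt (π / 2) * ∑' m : ℤ, Real.exp (-(lam ^ 2 / 2) * (m : ℝ) ^ 2)) *
        ∑ k ∈ S, ‖c k‖ ^ 2 := by
  set θ := ∑' m : ℤ, Real.exp (-(lam ^ 2 / 2) * (m : ℝ) ^ 2) with hθ
  simp only [norm_sq_sum_eq lam c S]
  have hint : ∀ k ∈ S, ∀ j ∈ S, Integrable (fun x : ℝ =>
      (c k * (starRingEnd ℂ) (c j)).re * (gauss (x - lam * k) * gauss (x - lam * j))) :=
    fun k _ j _ => (gauss_mul_integrable (lam * k) (lam * j)).const_mul _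
  rw [integral_finset_sum S (fun k hk => integrable_finset_sum S (fun j hj => hint k hk j hj))]
  set s := Real.sqrt (π / 2) with hs
  have step2 : ∀ k ∈ S, (∫ x : ℝ, ∑ j ∈ S, (c k * (starRingEnd ℂ) (c j)).re *
      (gauss (x - lam * k) * gauss (x - lam * j))) =
      ∑ j ∈ S, (c k * (starRingEnd ℂ) (c j)).re *
        (s * Real.exp (-(lam * k - lam * j) ^ 2 / 2)) := by
    intro k hk
    rw [integral_finset_sum S (fun j hj => hint k hk j hj)]
    exact Finset.sum_congr rfl fun j _ => by
      rw [MeasureTheory.integral_const_mul, gauss_mul_integral]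
  rw [Finset.sum_congr rfl step2]
  have key : ∀ k ∈ S, ∀ j ∈ S, (c k * (starRingEnd ℂ) (c j)).re *
      (s * Real.exp (-(lam * k - lam * j) ^ 2 / 2)) ≤
      (‖c k‖ ^ 2 + ‖c j‖ ^ 2) / 2 *
      (s * Real.exp (-(lam ^ 2 / 2) * ((k : ℝ) - j) ^ 2)) := by
    intro k _ j _
    have h1 : (c k * (starRingEnd ℂ) (c j)).re ≤ (‖c k‖ ^ 2 + ‖c j‖ ^ 2) / 2 := by
      calc (c k * (starRingEnd ℂ) (c j)).re ≤ ‖c k * (starRingEnd ℂ) (c j)‖ :=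
            Complex.re_le_norm _
        _ = ‖c k‖ * ‖c j‖ := by simp [norm_mul]
        _ ≤ (‖c k‖ ^ 2 + ‖c j‖ ^ 2) / 2 := by nlinarith [sq_nonneg (‖c k‖ - ‖c j‖)]
    have h2 : -(lam * k - lam * j) ^ 2 / 2 = -(lam ^ 2 / 2) * ((k : ℝ) - j) ^ 2 := by ring
    rw [h2]
    exact mul_le_mul_of_nonneg_right h1 (by positivity)
  set e := fun (k j : ℤ) => Real.exp (-(lam ^ 2 / 2) * ((k : ℝ) - j) ^ 2) with he
  have hs0 : 0 ≤ s := Real.sqrt_nonneg _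
  have hθ0 : 0 ≤ θ := tsum_nonneg (fun m => (Real.exp_pos _).le)
  have step3 : ∑ k ∈ S, ∑ j ∈ S, (c k * (starRingEnd ℂ) (c j)).re *
        (s * Real.exp (-(lam * k - lam * j) ^ 2 / 2)) ≤
      ∑ k ∈ S, ∑ j ∈ S, ((‖c k‖ ^ 2 + ‖c j‖ ^ 2) / 2) * (s * e k j) :=
    Finset.sum_le_sum fun k hk => Finset.sum_le_sum fun j hj => key k hk j hj
  have bound1 : ∑ k ∈ S, ∑ j ∈ S, ‖c k‖ ^ 2 * (s * e k j) ≤ (s * θ) * ∑ k ∈ S, ‖c k‖ ^ 2 := by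
    rw [Finset.mul_sum]
    refine Finset.sum_le_sum fun k _ => ?_
    rw [← Finset.mul_sum, ← Finset.mul_sum]
    have h : ∑ j ∈ S, e k j ≤ θ := sum_translates_le lam hlam k S
    calc ‖c k‖ ^ 2 * (s * ∑ j ∈ S, e k j) ≤ ‖c k‖ ^ 2 * (s * θ) :=
          mul_le_mul_of_nonneg_left (mul_le_mul_of_nonneg_left h hs0) (by positivity)
      _ = s * θ * ‖c k‖ ^ 2 := by ring
  have bound2 : ∑ k ∈ S, ∑ j ∈ S, ‖c j‖ ^ 2 * (s * e k j) ≤ (s * θ) * ∑ k ∈ S, ‖c k‖ ^ 2 := by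
    rw [Finset.sum_comm, Finset.mul_sum]
    refine Finset.sum_le_sum fun j _ => ?_
    rw [← Finset.mul_sum, ← Finset.mul_sum]
    have hesymm : ∀ k : ℤ, e k j = Real.exp (-(lam ^ 2 / 2) * ((j : ℝ) - k) ^ 2) := by
      intro k; rw [he]; ring_nf
    have h : ∑ k ∈ S, e k j ≤ θ := by
      rw [Finset.sum_congr rfl fun k _ => hesymm k]
      exact sum_translates_le lam hlam j S
    calc ‖c j‖ ^ 2 * (s * ∑ k ∈ S, e k j) ≤ ‖c j‖ ^ 2 * (s * θ) :=
          mul_le_mul_of_nonneg_left (mul_le_mul_of_nonneg_left h hs0) (by positivity)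
      _ = s * θ * ‖c j‖ ^ 2 := by ring
  have swap : ∑ k ∈ S, ∑ j ∈ S, ((‖c k‖ ^ 2 + ‖c j‖ ^ 2) / 2) * (s * e k j) =
      1/2 * (∑ k ∈ S, ∑ j ∈ S, ‖c k‖ ^ 2 * (s * e k j)) +
      1/2 * (∑ k ∈ S, ∑ j ∈ S, ‖c j‖ ^ 2 * (s * e k j)) := by
    rw [Finset.mul_sum, Finset.mul_sum, ← Finset.sum_add_distrib]
    refine Finset.sum_congr rfl fun k _ => ?_
    rw [Finset.mul_sum, Finset.mul_sum, ← Finset.sum_add_distrib]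
    exact Finset.sum_congr rfl fun j _ => by ring
  refine le_trans step3 ?_
  rw [swap]
  linarith [bound1, bound2]

lemma gaussFT_sq (u : ℝ) : gaussFT u ^ 2 = 1/2 * Real.exp (-u ^ 2 / 2) := by
  rw [gaussFT, mul_pow, div_pow, one_pow, Real.sq_sqrt (by norm_num : (0:ℝ) ≤ 2), sq,
    ← Real.exp_add]
  ring_nf

lemma gaussFT_term (lam : ℝ) (hlam : 0 < lam) (u : ℝ) :
    gaussFT (u / lam) ^ 2 = 1/2 * Real.exp (-u ^ 2 * (2 * lam ^ 2)⁻¹) := by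
  rw [gaussFT_sq]
  congr 1
  rw [div_pow]
  field_simp

lemma gaussFT_term_le (lam : ℝ) (hlam : 0 < lam) (w : ℝ) (l : ℤ) {B : ℝ} (hw : w ^ 2 ≤ B) :
    gaussFT ((w + 2 * π * l) / lam) ^ 2 ≤
      (1/2 * Real.exp (B * (2 * lam ^ 2)⁻¹)) * Real.exp (-(π ^ 2 / lam ^ 2) * (l : ℝ) ^ 2) := by
  rw [gaussFT_term lam hlam]
  rw [mul_assoc (1/2 : ℝ), ← Real.exp_add]
  have h2 : (0:ℝ) < (2 * lam ^ 2)⁻¹ := by positivity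
  refine mul_le_mul_of_nonneg_left (Real.exp_le_exp.2 ?_) (by norm_num)
  have hkey : 0 ≤ (2 * lam ^ 2)⁻¹ * (w + π * l) ^ 2 := by positivity
  have heq : π ^ 2 / lam ^ 2 = 2 * π ^ 2 * (2 * lam ^ 2)⁻¹ := by
    field_simp
  rw [heq]
  nlinarith [hkey, mul_le_mul_of_nonneg_right hw h2.le]

lemma summable_gaussFT (lam : ℝ) (hlam : 0 < lam) (w : ℝ) :
    Summable fun l : ℤ => gaussFT ((w + 2 * π * l) / lam) ^ 2 := by
  refine Summable.of_nonneg_of_le (fun l => sq_nonneg _)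
    (fun l => gaussFT_term_le lam hlam w l (le_refl (w ^ 2)))
    (((summable_exp_neg_sq (by positivity)).mul_left _))

lemma tsum_gaussFT_le (lam : ℝ) (hlam : 0 < lam) (w : ℝ) (hw : w ^ 2 ≤ π ^ 2) :
    ∑' l : ℤ, gaussFT ((w + 2 * π * l) / lam) ^ 2 ≤
      (1/2 * Real.exp (π ^ 2 * (2 * lam ^ 2)⁻¹)) *
        ∑' l : ℤ, Real.exp (-(π ^ 2 / lam ^ 2) * (l : ℝ) ^ 2) := by
  rw [← tsum_mul_left]
  exact Summable.tsum_le_tsum (fun l => gaussFT_term_le lam hlam w l hw)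
    (summable_gaussFT lam hlam w)
    (((summable_exp_neg_sq (by positivity)).mul_left _))

lemma bddAbove_gaussFT (lam : ℝ) (hlam : 0 < lam) :
    BddAbove (Set.range fun w : ℝ =>
      ∑' l : ℤ, (gaussFT ((w + 2 * Real.pi * l) / lam)) ^ 2) := by
  refine ⟨(1/2 * Real.exp (π ^ 2 * (2 * lam ^ 2)⁻¹)) *
      ∑' l : ℤ, Real.exp (-(π ^ 2 / lam ^ 2) * (l : ℝ) ^ 2), ?_⟩
  rintro y ⟨w, rfl⟩
  set m := round (w / (2 * π)) with hm
  set w' := w - 2 * π * m with hw'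
  have hwle : |w'| ≤ π := by
    have h := abs_sub_round (w / (2 * π))
    have h2π : (0:ℝ) < 2 * π := by positivity
    rw [hw']
    have : w - 2 * π * m = (w / (2 * π) - m) * (2 * π) := by field_simp
    rw [this, abs_mul, abs_of_pos h2π]
    calc |w / (2 * π) - ↑m| * (2 * π) ≤ 1/2 * (2 * π) :=
          mul_le_mul_of_nonneg_right h h2π.le
      _ = π := by ring
  have hre : (fun w : ℝ => ∑' l : ℤ, (gaussFT ((w + 2 * Real.pi * l) / lam)) ^ 2) w =
      ∑' l : ℤ, (gaussFT ((w' + 2 * Real.pi * l) / lam)) ^ 2 := by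
    simp only
    rw [← Equiv.tsum_eq (Equiv.addRight m) (fun l : ℤ => (gaussFT ((w' + 2 * Real.pi * l) / lam)) ^ 2)]
    congr 1; ext l
    simp only [Equiv.coe_addRight]
    congr 2
    push_cast
    rw [hw']
    ring
  rw [hre]
  exact tsum_gaussFT_le lam hlam w' (by nlinarith [abs_nonneg w', sq_abs w', abs_nonneg w', pi_pos, sq_le_sq' (neg_le_of_abs_le hwle) (le_of_abs_le hwle)])

lemma jacobi_eq (lam : ℝ) (hlam : 0 < lam) :
    Real.sqrt (π / 2) * ∑' m : ℤ, Real.exp (-(lam ^ 2 / 2) * (m : ℝ) ^ 2) =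
      2 * π / lam * ∑' l : ℤ, gaussFT ((0 + 2 * π * l) / lam) ^ 2 := by
  have ha : 0 < lam ^ 2 / (2 * π) := by positivity
  have jac := Real.tsum_exp_neg_mul_int_sq ha
  have e1 : ∀ n : ℤ, Real.exp (-π * (lam ^ 2 / (2 * π)) * (n:ℝ) ^ 2) =
      Real.exp (-(lam ^ 2 / 2) * (n:ℝ) ^ 2) := by
    intro n; congr 1
    have : -π * (lam ^ 2 / (2 * π)) = -(lam ^ 2 / 2) := by
      field_simp
    rw [this]
  have e2 : ∀ n : ℤ, Real.exp (-π / (lam ^ 2 / (2 * π)) * (n:ℝ) ^ 2) =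
      Real.exp (-(2 * π ^ 2 / lam ^ 2) * (n:ℝ) ^ 2) := by
    intro n; congr 1
    have : -π / (lam ^ 2 / (2 * π)) = -(2 * π ^ 2 / lam ^ 2) := by
      field_simp
    rw [this]
  simp only [e1, e2] at jac
  have e3 : ∀ l : ℤ, gaussFT ((0 + 2 * π * l) / lam) ^ 2 =
      1/2 * Real.exp (-(2 * π ^ 2 / lam ^ 2) * (l:ℝ) ^ 2) := by
    intro l
    rw [gaussFT_sq]
    congr 1
    rw [zero_add, div_pow, mul_pow, mul_pow]
    field_simp
  simp only [e3]
  rw [tsum_mul_left, jac]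
  have e4 : ((lam ^ 2 / (2 * π)) ^ ((1:ℝ)/2) : ℝ) = lam / Real.sqrt (2 * π) := by
    rw [← Real.sqrt_eq_rpow, Real.sqrt_div (sq_nonneg lam), Real.sqrt_sq hlam.le]
  rw [e4]
  have hpi : Real.sqrt (π / 2) * Real.sqrt (2 * π) = π := by
    rw [← Real.sqrt_mul (by positivity), show (π/2) * (2*π) = π^2 by ring,
      Real.sqrt_sq pi_pos.le]
  have hsne : Real.sqrt (2 * π) ≠ 0 := by positivity
  set SS := ∑' (n : ℤ), Real.exp (-(2 * π ^ 2 / lam ^ 2) * (n:ℝ) ^ 2)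
  calc Real.sqrt (π/2) * (1 / (lam / Real.sqrt (2*π)) * SS)
      = (Real.sqrt (π/2) * Real.sqrt (2*π)) / lam * SS := by
        field_simp
    _ = π / lam * SS := by rw [hpi]
    _ = 2 * π / lam * (1/2 * SS) := by ring

lemma lint_eq (lam : ℝ) (c : ℤ → ℂ) (S : Finset ℤ) :
    ∫⁻ x : ℝ, ENNReal.ofReal (‖∑ k ∈ S, c k * (gauss (x - lam * k) : ℂ)‖ ^ 2) =
      ENNReal.ofReal (∫ x : ℝ, ‖∑ k ∈ S, c k * (gauss (x - lam * k) : ℂ)‖ ^ 2) :=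
  (MeasureTheory.ofReal_integral_eq_lintegral_ofReal (finite_integrable lam c S)
    (Filter.Eventually.of_forall fun x => sq_nonneg _)).symm


end Aux

theorem gaussian_translates_L2_convergence_and_upper_bound
    (lam : ℝ) (hlam : 0 < lam) (c : ℤ → ℂ)
    (hc : Summable fun k : ℤ => ‖c k‖ ^ 2) :
    -- the symmetric partial sums form a Cauchy sequence in L²(ℝ)
    (∀ ε > 0, ∃ N : ℕ, ∀ m ≥ N, ∀ n ≥ N,
      eLpNorm (fun x : ℝ =>
          (∑ k ∈ Finset.Icc (-(n : ℤ)) (n : ℤ), c k * (gauss (x - lam * k) : ℂ)) -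
          ∑ k ∈ Finset.Icc (-(m : ℤ)) (m : ℤ), c k * (gauss (x - lam * k) : ℂ))
        2 volume < ENNReal.ofReal ε) ∧
    -- the quantity M(λ) is finite
    (∀ w : ℝ, Summable fun l : ℤ => (gaussFT ((w + 2 * Real.pi * l) / lam)) ^ 2) ∧
    BddAbove (Set.range fun w : ℝ =>
      ∑' l : ℤ, (gaussFT ((w + 2 * Real.pi * l) / lam)) ^ 2) ∧
    -- the limit function satisfies the upper bound
    ∫ x : ℝ, ‖∑' k : ℤ, c k * (gauss (x - lam * k) : ℂ)‖ ^ 2 ≤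
      (2 * Real.pi / lam * ⨆ w : ℝ, ∑' l : ℤ, (gaussFT ((w + 2 * Real.pi * l) / lam)) ^ 2) *
        ∑' k : ℤ, ‖c k‖ ^ 2 := by
  classical
  set θ := ∑' m : ℤ, Real.exp (-(lam ^ 2 / 2) * (m : ℝ) ^ 2) with hθdef
  have hθs : Summable fun m : ℤ => Real.exp (-(lam ^ 2 / 2) * (m : ℝ) ^ 2) :=
    summable_exp_neg_sq (by positivity)
  set A := Real.sqrt (π / 2) * θ with hAdef
  have hA0 : 0 < A :=
    mul_pos (Real.sqrt_pos.2 (by positivity))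
      (Summable.tsum_pos hθs (fun m => (Real.exp_pos _).le) 0 (Real.exp_pos _))
  have hcs0 : 0 ≤ ∑' k : ℤ, ‖c k‖ ^ 2 := tsum_nonneg fun k => sq_nonneg _
  -- Part 1 : Cauchy
  have part1 : ∀ ε > 0, ∃ N : ℕ, ∀ m ≥ N, ∀ n ≥ N,
      eLpNorm (fun x : ℝ =>
          (∑ k ∈ Finset.Icc (-(n : ℤ)) (n : ℤ), c k * (gauss (x - lam * k) : ℂ)) -
          ∑ k ∈ Finset.Icc (-(m : ℤ)) (m : ℤ), c k * (gauss (x - lam * k) : ℂ))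
        2 volume < ENNReal.ofReal ε := by
    intro ε hε
    have hε2 : 0 < ε ^ 2 / A := by positivity
    obtain ⟨s₀, hs₀⟩ := summable_iff_vanishing.mp hc (Metric.ball 0 (ε ^ 2 / A))
      (Metric.ball_mem_nhds _ hε2)
    set N := s₀.sup fun k => k.natAbs with hN
    have hsub0 : ∀ M : ℕ, N ≤ M → s₀ ⊆ Finset.Icc (-(M : ℤ)) M := by
      intro M hM k hk
      have h1 : k.natAbs ≤ N := Finset.le_sup (f := fun k : ℤ => k.natAbs) hk
      simp only [Finset.mem_Icc]
      omega
    refine ⟨N, ?_⟩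
    have key : ∀ m n : ℕ, N ≤ m → m ≤ n →
        eLpNorm (fun x : ℝ =>
          (∑ k ∈ Finset.Icc (-(n : ℤ)) (n : ℤ), c k * (gauss (x - lam * k) : ℂ)) -
          ∑ k ∈ Finset.Icc (-(m : ℤ)) (m : ℤ), c k * (gauss (x - lam * k) : ℂ))
        2 volume < ENNReal.ofReal ε := by
      intro m n hm hmn
      have hsub : Finset.Icc (-(m : ℤ)) (m : ℤ) ⊆ Finset.Icc (-(n : ℤ)) (n : ℤ) :=
        Finset.Icc_subset_Icc (by exact_mod_cast neg_le_neg (Int.ofNat_le.2 hmn))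
          (by exact_mod_cast hmn)
      set T := Finset.Icc (-(n : ℤ)) (n : ℤ) \ Finset.Icc (-(m : ℤ)) (m : ℤ) with hT
      have hfeq : (fun x : ℝ =>
          (∑ k ∈ Finset.Icc (-(n : ℤ)) (n : ℤ), c k * (gauss (x - lam * k) : ℂ)) -
          ∑ k ∈ Finset.Icc (-(m : ℤ)) (m : ℤ), c k * (gauss (x - lam * k) : ℂ)) =
          fun x : ℝ => ∑ k ∈ T, c k * (gauss (x - lam * k) : ℂ) := by
        funext x
        rw [hT, Finset.sum_sdiff_eq_sub hsub]
      rw [hfeq]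
      have hdisj : Disjoint T s₀ :=
        Finset.sdiff_disjoint.mono_right (Finset.le_iff_subset.2 (hsub0 m hm))
      have hTsum : ∑ k ∈ T, ‖c k‖ ^ 2 < ε ^ 2 / A := by
        have h3 := hs₀ T hdisj
        rw [Metric.mem_ball, Real.dist_eq, sub_zero,
          abs_of_nonneg (Finset.sum_nonneg fun k _ => sq_nonneg _)] at h3
        exact h3
      have hIlt : ∫ x : ℝ, ‖∑ k ∈ T, c k * (gauss (x - lam * k) : ℂ)‖ ^ 2 < ε ^ 2 := by
        refine lt_of_le_of_lt (finite_bound lam hlam c T) ?_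
        calc A * ∑ k ∈ T, ‖c k‖ ^ 2 < A * (ε ^ 2 / A) :=
              mul_lt_mul_of_pos_left hTsum hA0
          _ = ε ^ 2 := by field_simp
      have hI0 : 0 ≤ ∫ x : ℝ, ‖∑ k ∈ T, c k * (gauss (x - lam * k) : ℂ)‖ ^ 2 :=
        integral_nonneg fun x => sq_nonneg _
      rw [eLpNorm_eq_lintegral_rpow_enorm_toReal (by norm_num) (by norm_num)]
      have hpt : ∀ x : ℝ, (‖∑ k ∈ T, c k * (gauss (x - lam * k) : ℂ)‖ₑ) ^ (2 : ℝ≥0∞).toReal =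
          ENNReal.ofReal (‖∑ k ∈ T, c k * (gauss (x - lam * k) : ℂ)‖ ^ 2) := by
        intro x
        rw [ENNReal.toReal_ofNat, ← ofReal_norm_eq_enorm,
          ENNReal.ofReal_rpow_of_nonneg (norm_nonneg _) (by norm_num)]
        norm_num [Real.rpow_natCast]
      simp only [hpt]
      rw [lint_eq lam c T]
      have hlt2 : ENNReal.ofReal (∫ x : ℝ, ‖∑ k ∈ T, c k * (gauss (x - lam * k) : ℂ)‖ ^ 2) <
          ENNReal.ofReal (ε ^ 2) := (ENNReal.ofReal_lt_ofReal_iff (by positivity)).2 hIlt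
      calc (ENNReal.ofReal (∫ x : ℝ, ‖∑ k ∈ T, c k * (gauss (x - lam * k) : ℂ)‖ ^ 2)) ^
            (1 / (2 : ℝ≥0∞).toReal)
          < (ENNReal.ofReal (ε ^ 2)) ^ (1 / (2 : ℝ≥0∞).toReal) := by
            rw [ENNReal.toReal_ofNat]
            exact ENNReal.rpow_lt_rpow hlt2 (by norm_num)
        _ = ENNReal.ofReal ε := by
            rw [ENNReal.toReal_ofNat, ENNReal.ofReal_rpow_of_nonneg (by positivity) (by norm_num),
              ← Real.rpow_natCast ε 2, ← Real.rpow_mul hε.le]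
            norm_num
    intro m hm n hn
    rcases le_total m n with h | h
    · exact key m n hm h
    · have h2 := key n m hn h
      have heq : eLpNorm (fun x : ℝ =>
          (∑ k ∈ Finset.Icc (-(n : ℤ)) (n : ℤ), c k * (gauss (x - lam * k) : ℂ)) -
          ∑ k ∈ Finset.Icc (-(m : ℤ)) (m : ℤ), c k * (gauss (x - lam * k) : ℂ)) 2 volume =
          eLpNorm (fun x : ℝ =>
          (∑ k ∈ Finset.Icc (-(m : ℤ)) (m : ℤ), c k * (gauss (x - lam * k) : ℂ)) -
          ∑ k ∈ Finset.Icc (-(n : ℤ)) (n : ℤ), c k * (gauss (x - lam * k) : ℂ)) 2 volume := by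
        rw [← eLpNorm_neg (f := fun x : ℝ =>
          (∑ k ∈ Finset.Icc (-(m : ℤ)) (m : ℤ), c k * (gauss (x - lam * k) : ℂ)) -
          ∑ k ∈ Finset.Icc (-(n : ℤ)) (n : ℤ), c k * (gauss (x - lam * k) : ℂ))]
        congr 1
        funext x
        simp only [Pi.neg_apply]
        ring
      rw [heq]
      exact h2
  refine ⟨part1, fun w => summable_gaussFT lam hlam w, bddAbove_gaussFT lam hlam, ?_⟩
  -- Part 4 : the limit bound
  set f := fun x : ℝ => ∑' k : ℤ, c k * (gauss (x - lam * k) : ℂ) with hfdef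
  set F := fun (n : ℕ) (x : ℝ) =>
    ∑ k ∈ Finset.Icc (-(n : ℤ)) (n : ℤ), c k * (gauss (x - lam * k) : ℂ) with hFdef
  have hgauss_le : ∀ (x : ℝ) (k : ℤ), gauss (x - lam * k) ≤
      Real.exp (x ^ 2) * Real.exp (-(lam ^ 2 / 2) * (k : ℝ) ^ 2) := by
    intro x k
    rw [gauss, ← Real.exp_add]
    apply Real.exp_le_exp.2
    nlinarith [sq_nonneg (2 * x - lam * k)]
  have hsum : ∀ x : ℝ, Summable fun k : ℤ => c k * (gauss (x - lam * k) : ℂ) := by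
    intro x
    apply Summable.of_norm
    have hle : ∀ k : ℤ, ‖c k * (gauss (x - lam * k) : ℂ)‖ ≤
        (1 + ‖c k‖ ^ 2) * (Real.exp (x ^ 2) * Real.exp (-(lam ^ 2 / 2) * (k : ℝ) ^ 2)) := by
      intro k
      have hg0 : (0:ℝ) ≤ gauss (x - lam * k) := by rw [gauss]; exact (Real.exp_pos _).le
      rw [norm_mul, Complex.norm_real, Real.norm_eq_abs, abs_of_nonneg hg0]
      have h1 : ‖c k‖ ≤ 1 + ‖c k‖ ^ 2 := by nlinarith [sq_nonneg (‖c k‖ - 1)]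
      exact mul_le_mul h1 (hgauss_le x k) hg0 (by positivity)
    refine Summable.of_nonneg_of_le (fun k => norm_nonneg _) hle ?_
    have h1 : Summable fun k : ℤ => Real.exp (x ^ 2) * Real.exp (-(lam ^ 2 / 2) * (k : ℝ) ^ 2) :=
      (summable_exp_neg_sq (by positivity)).mul_left _
    have h2 : Summable fun k : ℤ =>
        ‖c k‖ ^ 2 * (Real.exp (x ^ 2) * Real.exp (-(lam ^ 2 / 2) * (k : ℝ) ^ 2)) := by
      refine Summable.of_nonneg_of_le (fun k => by positivity) (fun k => ?_) (hc.mul_left (Real.exp (x ^ 2)))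
      have he1 : Real.exp (-(lam ^ 2 / 2) * (k : ℝ) ^ 2) ≤ 1 :=
        Real.exp_le_one_iff.2 (by nlinarith [sq_nonneg ((k:ℝ))])
      calc ‖c k‖ ^ 2 * (Real.exp (x ^ 2) * Real.exp (-(lam ^ 2 / 2) * (k : ℝ) ^ 2))
          ≤ ‖c k‖ ^ 2 * (Real.exp (x ^ 2) * 1) :=
            mul_le_mul_of_nonneg_left (mul_le_mul_of_nonneg_left he1 (Real.exp_pos _).le)
              (sq_nonneg _)
        _ = Real.exp (x ^ 2) * ‖c k‖ ^ 2 := by ring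
    simpa [add_mul, one_mul] using h1.add h2
  have hmono : Monotone fun n : ℕ => Finset.Icc (-(n : ℤ)) (n : ℤ) := by
    intro a b hab
    apply Finset.Icc_subset_Icc
    · exact_mod_cast neg_le_neg (Int.ofNat_le.2 hab)
    · exact_mod_cast hab
  have hcov : ∀ k : ℤ, ∃ n : ℕ, k ∈ Finset.Icc (-(n : ℤ)) (n : ℤ) := by
    intro k
    refine ⟨k.natAbs, ?_⟩
    simp only [Finset.mem_Icc]
    omega
  have htend : ∀ x : ℝ, Filter.Tendsto (fun n : ℕ => F n x) Filter.atTop (nhds (f x)) :=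
    fun x => (hsum x).hasSum.comp (Filter.tendsto_atTop_finset_of_monotone hmono hcov)
  have hcont : ∀ n : ℕ, Continuous (F n) := by
    intro n
    refine continuous_finset_sum _ fun k _ => continuous_const.mul ?_
    exact Complex.continuous_ofReal.comp
      ((Real.continuous_exp.comp (continuous_neg.comp (continuous_pow 2))).comp
        (continuous_id.sub continuous_const))
  have hmeasf : Measurable f :=
    measurable_of_tendsto_metrizable (fun n => (hcont n).measurable)
      (tendsto_pi_nhds.2 htend)
  have hAS : 0 ≤ A * ∑' k : ℤ, ‖c k‖ ^ 2 := mul_nonneg hA0.le hcs0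
  have hFn_bound : ∀ n : ℕ, ∫⁻ x : ℝ, ENNReal.ofReal (‖F n x‖ ^ 2) ≤
      ENNReal.ofReal (A * ∑' k : ℤ, ‖c k‖ ^ 2) := by
    intro n
    rw [hFdef]
    rw [lint_eq lam c (Finset.Icc (-(n : ℤ)) (n : ℤ))]
    apply ENNReal.ofReal_le_ofReal
    refine (finite_bound lam hlam c _).trans ?_
    exact mul_le_mul_of_nonneg_left
      (Summable.sum_le_tsum _ (fun k _ => sq_nonneg _) hc) hA0.le
  have hfat : ∫⁻ x : ℝ, ENNReal.ofReal (‖f x‖ ^ 2) ≤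
      ENNReal.ofReal (A * ∑' k : ℤ, ‖c k‖ ^ 2) := by
    have hlim : ∀ x : ℝ, Filter.Tendsto (fun n : ℕ => ENNReal.ofReal (‖F n x‖ ^ 2))
        Filter.atTop (nhds (ENNReal.ofReal (‖f x‖ ^ 2))) := by
      intro x
      exact (ENNReal.continuous_ofReal.tendsto _).comp
        (((continuous_pow 2).tendsto _).comp ((continuous_norm.tendsto _).comp (htend x)))
    calc ∫⁻ x : ℝ, ENNReal.ofReal (‖f x‖ ^ 2)
        = ∫⁻ x : ℝ, Filter.liminf (fun n : ℕ => ENNReal.ofReal (‖F n x‖ ^ 2)) Filter.atTop := by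
          refine lintegral_congr fun x => ?_
          exact ((hlim x).liminf_eq).symm
      _ ≤ Filter.liminf (fun n : ℕ => ∫⁻ x : ℝ, ENNReal.ofReal (‖F n x‖ ^ 2)) Filter.atTop := by
          refine lintegral_liminf_le fun n => ?_
          exact (((hcont n).norm.pow 2).measurable).ennreal_ofReal
      _ ≤ ENNReal.ofReal (A * ∑' k : ℤ, ‖c k‖ ^ 2) :=
          Filter.liminf_le_of_frequently_le
            (Filter.Frequently.of_forall fun n => hFn_bound n)
  have hint_eq : ∫ x : ℝ, ‖f x‖ ^ 2 =
      (∫⁻ x : ℝ, ENNReal.ofReal (‖f x‖ ^ 2)).toReal := by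
    exact integral_eq_lintegral_of_nonneg_ae
      (Filter.Eventually.of_forall fun x => sq_nonneg _)
      ((hmeasf.norm.pow_const 2).aestronglyMeasurable)
  have hmain : ∫ x : ℝ, ‖f x‖ ^ 2 ≤ A * ∑' k : ℤ, ‖c k‖ ^ 2 := by
    rw [hint_eq]
    have h := ENNReal.toReal_mono ENNReal.ofReal_ne_top hfat
    rwa [ENNReal.toReal_ofReal hAS] at h
  refine hmain.trans ?_
  have hjac := jacobi_eq lam hlam
  have hle0 : (∑' l : ℤ, gaussFT ((0 + 2 * π * (l : ℤ)) / lam) ^ 2) ≤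
      ⨆ w : ℝ, ∑' l : ℤ, gaussFT ((w + 2 * π * (l : ℤ)) / lam) ^ 2 :=
    le_ciSup (bddAbove_gaussFT lam hlam) 0
  have hA_eq : A = 2 * π / lam * ∑' l : ℤ, gaussFT ((0 + 2 * π * (l : ℤ)) / lam) ^ 2 := hjac
  refine mul_le_mul_of_nonneg_right ?_ hcs0
  rw [hA_eq]
  exact mul_le_mul_of_nonneg_left hle0 (by positivity)
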